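/- Suppose a = 0 and b ∈ C_j^{(d_2, r)} for some 0 ≤ j ≤ d_2 − 1. Then the Hamming weight of c(a, b) equals (q−1)n_1 n_2/q − ((q−1) d_2 n_1/(q N_2)) · η_j^{(d_2, r)} (equality after casting the weight into ℂ). -/

import Mathlib

set_option linter.unusedSectionVars false
set_option maxHeartbeats 1000000


/-- The canonical additive character `ψ(x) = e^{2πi·Tr_{F/F_p}(x)/p}` of a finite field `F`
of characteristic `p`. -/
noncomputable def psi (p : ℕ) (F : Type*) [Field F] [Fintype F] [Algebra (ZMod p) F]
    (x : F) : ℂ :=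
  Complex.exp (2 * (Real.pi : ℂ) * Complex.I * ((Algebra.trace (ZMod p) F x).val : ℂ) / (p : ℂ))

/-- The cyclotomic class `C_i^{(N,r)} = α^i ⟨α^N⟩` in a finite field. -/
def cClass (F : Type*) [Field F] (α : Fˣ) (N i : ℕ) : Set F :=
  {x | ∃ t : ℕ, x = ((α ^ (i + N * t) : Fˣ) : F)}

/-- The Gauss period `η_i^{(N,r)} = Σ_{x ∈ C_i^{(N,r)}} ψ(x)`. -/
noncomputable def gaussPeriod (p : ℕ) (F : Type*) [Field F] [Fintype F] [Algebra (ZMod p) F]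
    (α : Fˣ) (N i : ℕ) : ℂ :=
  ∑ t ∈ Finset.range ((Fintype.card F - 1) / N), psi p F ((α ^ (i + N * t) : Fˣ) : F)

open Finset

/-! ### auxiliary lemmas -/

section Ep
variable (p : ℕ) [Fact p.Prime]

noncomputable def ep (k : ℕ) : ℂ :=
  Complex.exp (2 * (Real.pi : ℂ) * Complex.I * (k : ℂ) / (p : ℂ))

lemma p_ne_zero : (p:ℂ) ≠ 0 := by
  exact_mod_cast (Fact.out : p.Prime).ne_zero

lemma ep_add (k l : ℕ) : ep p (k + l) = ep p k * ep p l := by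
  rw [ep, ep, ep, ← Complex.exp_add]
  congr 1
  push_cast
  ring

lemma ep_mod (k : ℕ) : ep p (k % p) = ep p k := by
  conv_rhs => rw [← Nat.mod_add_div k p]
  rw [ep_add]
  set j := k / p with hj
  have : ep p (p * j) = 1 := by
    rw [ep]
    have hpc : (p:ℂ) ≠ 0 := p_ne_zero p
    have : 2 * (Real.pi : ℂ) * Complex.I * ((p * j : ℕ) : ℂ) / (p : ℂ)
        = (j : ℤ) * (2 * (Real.pi : ℂ) * Complex.I) := by
      push_cast
      field_simp
    rw [this]
    exact Complex.exp_int_mul_two_pi_mul_I _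
  rw [this, mul_one]

lemma ep_ne_one (k : ℕ) (h0 : 0 < k) (hk : k < p) : ep p k ≠ 1 := by
  intro h
  rw [ep, Complex.exp_eq_one_iff] at h
  obtain ⟨n, hn⟩ := h
  have h2 : (2 * (Real.pi : ℂ) * Complex.I) ≠ 0 := by
    simp [Real.pi_ne_zero, Complex.I_ne_zero]
  have hpc : (p:ℂ) ≠ 0 := p_ne_zero p
  have hkn : (k : ℂ) = (n : ℂ) * (p : ℂ) := by
    field_simp at hn
    linear_combination hn
  have : (k : ℝ) = (n : ℝ) * (p : ℝ) := by exact_mod_cast hkn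
  have hp : (0:ℝ) < p := by exact_mod_cast (Fact.out : p.Prime).pos
  have h1 : (0:ℝ) < (n:ℝ) * p := by rw [← this]; exact_mod_cast h0
  have h2' : (n:ℝ) * p < 1 * p := by rw [← this, one_mul]; exact_mod_cast hk
  have hn0 : (0:ℝ) < (n:ℝ) := by nlinarith
  have hn1 : (n:ℝ) < 1 := by nlinarith
  have : (0:ℤ) < n := by exact_mod_cast hn0
  have : n < 1 := by exact_mod_cast hn1
  omega
end Ep

section Psi
variable (p : ℕ) [Fact p.Prime] (E : Type*) [Field E] [Fintype E] [Algebra (ZMod p) E]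

lemma psi_eq_ep (x : E) : psi p E x = ep p ((Algebra.trace (ZMod p) E x).val) := rfl

lemma psi_zero : psi p E 0 = 1 := by
  rw [psi_eq_ep, map_zero, ZMod.val_zero]
  simp [ep]

lemma psi_add (x y : E) : psi p E (x + y) = psi p E x * psi p E y := by
  rw [psi_eq_ep, psi_eq_ep, psi_eq_ep, map_add, ZMod.val_add, ep_mod, ep_add]

lemma sum_psi_eq_zero (htr : Algebra.trace (ZMod p) E ≠ 0) :
    ∑ z : E, psi p E z = 0 := by
  obtain ⟨z₀, hz₀⟩ : ∃ z₀ : E, Algebra.trace (ZMod p) E z₀ ≠ 0 := by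
    by_contra h
    push_neg at h
    exact htr (LinearMap.ext fun z => h z)
  have hpsi : psi p E z₀ ≠ 1 := by
    rw [psi_eq_ep]
    refine ep_ne_one p _ ?_ ?_
    · exact Nat.pos_of_ne_zero fun h => hz₀ ((ZMod.val_eq_zero _).mp h)
    · exact ZMod.val_lt _
  have h1 : ∑ z : E, psi p E z = ∑ z : E, psi p E (z + z₀) :=
    (Fintype.sum_equiv (Equiv.addRight z₀) _ _ (fun z => rfl)).symm
  have h2 : ∑ z : E, psi p E (z + z₀) = (∑ z : E, psi p E z) * psi p E z₀ := by
    rw [Finset.sum_mul]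
    exact Finset.sum_congr rfl fun z _ => psi_add p E z z₀
  have := h1.trans h2
  by_contra hS
  exact hpsi (by field_simp at this; tauto)
end Psi

section SumK
variable (p : ℕ) [Fact p.Prime] (K F : Type*) [Field K] [Fintype K] [DecidableEq K]
  [Field F] [Fintype F]
  [Algebra (ZMod p) F] [Algebra K F] [Algebra (ZMod p) K] [IsScalarTower (ZMod p) K F]

lemma psi_smul (y : K) (x : F) :
    psi p F (algebraMap K F y * x) = psi p K (y * Algebra.trace K F x) := by
  rw [psi, psi]
  congr 3
  rw [← Algebra.smul_def, ← Algebra.trace_trace (S := K), map_smul]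
  simp [smul_eq_mul]

lemma sum_K (x : F) :
    ∑ y : K, psi p F (algebraMap K F y * x)
      = if Algebra.trace K F x = 0 then (Fintype.card K : ℂ) else 0 := by
  have h : ∀ y : K, psi p F (algebraMap K F y * x) = psi p K (y * Algebra.trace K F x) :=
    fun y => psi_smul p K F y x
  simp only [h]
  classical
  by_cases hc : Algebra.trace K F x = 0
  · rw [if_pos hc]
    simp [hc, psi_zero p K, Finset.card_univ]
  · rw [if_neg hc]
    have hbij : ∑ y : K, psi p K (y * Algebra.trace K F x) = ∑ z : K, psi p K z := by
      exact Fintype.sum_bijective (fun y => y * Algebra.trace K F x)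
        (mulRight_bijective₀ _ hc) _ _ (fun y => rfl)
    rw [hbij]
    exact sum_psi_eq_zero p K (Algebra.trace_ne_zero (ZMod p) K)
end SumK

section Fiber

lemma fiber_card_eq {G H : Type*} [AddCommGroup G] [Fintype G] [AddCommGroup H]
    [DecidableEq H] (f : G →+ H) (b : H) (x₀ : G) (hx₀ : f x₀ = b) :
    #{a : G | f a = b} = #{a : G | f a = 0} := by
  refine Finset.card_nbij (fun a => a - x₀) ?_ ?_ ?_
  · intro a ha
    simp only [Finset.coe_filter, Set.mem_setOf_eq, Finset.mem_filter, mem_univ, true_and,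
      map_sub] at ha ⊢
    rw [ha, hx₀, sub_self]
  · intro a _ a' _ h
    simpa using h
  · intro c hc
    simp only [Finset.coe_filter, Set.mem_setOf_eq, mem_univ, true_and] at hc ⊢
    refine ⟨c + x₀, ?_, by simp⟩
    simp only [Set.mem_setOf_eq, map_add, hc, hx₀, zero_add]

lemma sum_comp_surj {G H : Type*} [AddCommGroup G] [Fintype G] [AddCommGroup H] [Fintype H]
    [DecidableEq H] (f : G →+ H) (hf : Function.Surjective f) (F : H → ℂ) :
    ∑ x : G, F (f x) = (#{a : G | f a = 0} : ℂ) * ∑ y : H, F y := by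
  rw [Finset.sum_comp]
  have himg : Finset.univ.image f = Finset.univ := by
    apply Finset.eq_univ_of_forall
    intro y
    obtain ⟨x, hx⟩ := hf y
    exact Finset.mem_image.mpr ⟨x, Finset.mem_univ x, hx⟩
  rw [himg, Finset.mul_sum]
  refine Finset.sum_congr rfl fun b _ => ?_
  rw [fiber_card_eq f b _ (hf b).choose_spec]
  simp [nsmul_eq_mul]

lemma card_mul_card {G H : Type*} [AddCommGroup G] [Fintype G] [AddCommGroup H] [Fintype H]
    [DecidableEq H] (f : G →+ H) (hf : Function.Surjective f) :
    #{a : G | f a = 0} * Fintype.card H = Fintype.card G := by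
  classical
  have h : ∀ y : H, #{a : G | f a = y} = #{a : G | f a = 0} :=
    fun y => fiber_card_eq f y _ (hf y).choose_spec
  have hsum : ∑ y : H, #{a : G | f a = y} = Fintype.card G := by
    rw [← Finset.card_eq_sum_card_fiberwise (fun x _ => Finset.mem_univ (f x))]
    simp [Finset.card_univ]
  rw [← hsum]
  simp only [h]
  simp [Finset.sum_const, Finset.card_univ, mul_comm]

end Fiber

lemma sum_range_zmod (n : ℕ) [NeZero n] (f : ℕ → ℂ) :
    ∑ x : ZMod n, f x.val = ∑ k ∈ range n, f k := by
  refine Finset.sum_nbij' (fun x => x.val) (fun k => (k : ZMod n)) ?_ ?_ ?_ ?_ ?_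
  · intro x _; exact Finset.mem_range.mpr (ZMod.val_lt x)
  · intro k _; exact Finset.mem_univ _
  · intro x _; exact ZMod.natCast_rightInverse x
  · intro k hk; exact ZMod.val_cast_of_lt (Finset.mem_range.mp hk)
  · intro x _; rfl

/-- The `ℤ →+ ZMod M` hom `z ↦ z • c` descends to `ZMod n`. -/
noncomputable def zmodSmulHom (n M : ℕ) (c : ZMod M) (h : (n : ℤ) • c = 0) :
    ZMod n →+ ZMod M :=
  ZMod.lift n ⟨zmultiplesHom (ZMod M) c, h⟩

lemma zmodSmulHom_natCast (n M : ℕ) (c : ZMod M) (h : (n : ℤ) • c = 0) (u : ℕ) :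
    zmodSmulHom n M c h ((u : ℕ) : ZMod n) = (u : ZMod M) * c := by
  have : ((u : ℕ) : ZMod n) = ((u : ℤ) : ZMod n) := by push_cast; rfl
  rw [this, zmodSmulHom, ZMod.lift_coe]
  simp [zmultiplesHom, zsmul_eq_mul]

lemma double_sum_eq (a b M : ℕ) [NeZero a] [NeZero b] [NeZero M] (c₁ c₂ t₀ : ℕ)
    (h₁ : M ∣ c₁ * a) (h₂ : M ∣ c₂ * b)
    (hco : Nat.gcd c₁ (Nat.gcd c₂ M) = 1) (G : ZMod M → ℂ) :
    ∃ k₀ : ℕ, k₀ * M = a * b ∧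
      ∑ t ∈ range b, ∑ u ∈ range a, G (((t₀ + c₁ * u + c₂ * t : ℕ) : ZMod M))
        = (k₀ : ℂ) * ∑ v : ZMod M, G v := by
  classical
  have hc₁ : ((a : ℤ)) • ((c₁ : ZMod M)) = 0 := by
    rw [zsmul_eq_mul]
    push_cast
    rw [mul_comm]
    exact_mod_cast (ZMod.natCast_eq_zero_iff _ _).mpr h₁
  have hc₂ : ((b : ℤ)) • ((c₂ : ZMod M)) = 0 := by
    rw [zsmul_eq_mul]
    push_cast
    rw [mul_comm]
    exact_mod_cast (ZMod.natCast_eq_zero_iff _ _).mpr h₂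
  set f₁ := zmodSmulHom a M (c₁ : ZMod M) hc₁ with hf₁
  set f₂ := zmodSmulHom b M (c₂ : ZMod M) hc₂ with hf₂
  set φ : ZMod a × ZMod b →+ ZMod M :=
    (f₁.comp (AddMonoidHom.fst _ _)) + (f₂.comp (AddMonoidHom.snd _ _)) with hφ
  have hint : ∀ (z : ℤ) (n M' : ℕ) (c : ZMod M') (h : (n:ℤ) • c = 0),
      zmodSmulHom n M' c h ((z : ZMod n)) = (z : ZMod M') * c := by
    intro z n M' c h
    rw [zmodSmulHom, ZMod.lift_coe]
    simp [zmultiplesHom, zsmul_eq_mul]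
  have hφapp : ∀ v : ZMod a × ZMod b, φ v = f₁ v.1 + f₂ v.2 := fun v => rfl
  have hφeval : ∀ u t : ℕ, φ ((u : ZMod a), (t : ZMod b)) = ((c₁ * u + c₂ * t : ℕ) : ZMod M) := by
    intro u t
    rw [hφapp]
    simp only [hf₁, hf₂]
    rw [zmodSmulHom_natCast, zmodSmulHom_natCast]
    push_cast
    ring
  have hsurj : Function.Surjective φ := by
    have key : ∃ v : ZMod a × ZMod b, φ v = 1 := by
      have e1 := Nat.gcd_eq_gcd_ab c₁ (Nat.gcd c₂ M)
      have e2 := Nat.gcd_eq_gcd_ab c₂ M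
      rw [hco] at e1
      set x := Nat.gcdA c₁ (Nat.gcd c₂ M) with hx
      set y := Nat.gcdB c₁ (Nat.gcd c₂ M) with hy
      set x' := Nat.gcdA c₂ M with hx'
      set y' := Nat.gcdB c₂ M with hy'
      have e1' : (1:ℤ) = c₁ * x + (Nat.gcd c₂ M : ℤ) * y := by exact_mod_cast e1
      have hzint : (1 : ℤ) = c₁ * x + c₂ * (x' * y) + M * (y' * y) := by
        rw [e1', e2]; ring
      refine ⟨((x : ZMod a), ((x' * y : ℤ) : ZMod b)), ?_⟩
      rw [hφapp]
      simp only [hf₁, hf₂]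
      rw [hint, hint]
      have : ((1 : ℤ) : ZMod M) = ((c₁ * x + c₂ * (x' * y) + M * (y' * y) : ℤ) : ZMod M) := by
        rw [← hzint]
      push_cast at this
      rw [eq_comm, this]
      have hM2 : ((M:ℕ) : ZMod M) = 0 := ZMod.natCast_self M
      push_cast [hM2]
      ring
    obtain ⟨v, hv⟩ := key
    intro c
    refine ⟨c.val • v, ?_⟩
    rw [map_nsmul, hv, nsmul_eq_mul, mul_one]
    exact ZMod.natCast_rightInverse c
  refine ⟨#{w : ZMod a × ZMod b | φ w = 0}, ?_, ?_⟩
  · have := card_mul_card φ hsurj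
    rwa [ZMod.card, Fintype.card_prod, ZMod.card, ZMod.card] at this
  · have step1 : ∑ t ∈ range b, ∑ u ∈ range a, G (((t₀ + c₁ * u + c₂ * t : ℕ) : ZMod M))
        = ∑ w : ZMod a × ZMod b, G ((t₀ : ZMod M) + φ w) := by
      rw [Fintype.sum_prod_type_right]
      rw [← sum_range_zmod b (fun t => ∑ u ∈ range a, G (((t₀ + c₁ * u + c₂ * t : ℕ) : ZMod M)))]
      refine Finset.sum_congr rfl fun y _ => ?_
      rw [← sum_range_zmod a (fun u => G (((t₀ + c₁ * u + c₂ * y.val : ℕ) : ZMod M)))]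
      refine Finset.sum_congr rfl fun x _ => ?_
      congr 1
      have hxy : φ (x, y) = ((c₁ * x.val + c₂ * y.val : ℕ) : ZMod M) := by
        conv_lhs => rw [← ZMod.natCast_rightInverse x, ← ZMod.natCast_rightInverse y]
        exact hφeval x.val y.val
      rw [hxy]
      push_cast
      ring
    rw [step1, sum_comp_surj φ hsurj (fun w => G ((t₀ : ZMod M) + w))]
    congr 1
    exact Fintype.sum_equiv (Equiv.addLeft (t₀ : ZMod M)) _ _ (fun v => rfl)

lemma periodic_sum (n k : ℕ) (F : ℕ → ℕ) :
    ∑ t ∈ range (k * n), F (t % n) = k * ∑ t ∈ range n, F t := by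
  induction k with
  | zero => simp
  | succ k ih =>
    have h : (k + 1) * n = k * n + n := by ring
    rw [h, Finset.sum_range_add, ih, add_mul, one_mul]
    congr 1
    refine Finset.sum_congr rfl fun x hx => ?_
    congr 1
    have hx' := Finset.mem_range.mp hx
    conv_lhs => rw [mul_comm k n]
    rw [Nat.mul_add_mod]
    exact Nat.mod_eq_of_lt hx'



/-- if `a = 0` and `b ∈ C_j^{(d₂,r)}`, the weight of `c(a,b)` is
`(q-1)n₁n₂/q - ((q-1)d₂n₁/(qN₂))·η_j^{(d₂,r)}`. -/
theorem stmt4 (p s m : ℕ) [Fact p.Prime] (hs : 0 < s) (hm : 0 < m)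
    (K F : Type*) [Field K] [Fintype K] [DecidableEq K] [Field F] [Fintype F]
    [Algebra (ZMod p) F] [Algebra K F]
    (hq : Fintype.card K = p ^ s) (hr : Fintype.card F = Fintype.card K ^ m)
    (α : Fˣ) (hα : ∀ x : Fˣ, x ∈ Subgroup.zpowers α)
    (g₁ g₂ : Fˣ) (n₁ n₂ : ℕ) (h₁ : orderOf g₁ = n₁) (h₂ : orderOf g₂ = n₂)
    (hcop : Nat.Coprime n₁ n₂)
    (N₀ N₁ N₂ d₁ d₂ d : ℕ)
    (hN₀ : N₀ = (Fintype.card F - 1) / (Fintype.card K - 1))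
    (hN₁ : N₁ = (Fintype.card F - 1) / n₁)
    (hN₂ : N₂ = (Fintype.card F - 1) / n₂)
    (hd₁ : d₁ = Nat.gcd N₀ N₁) (hd₂ : d₂ = Nat.gcd N₀ N₂)
    (hd : d = Nat.gcd (N₀ * N₂ / d₂) N₁)
    (a b : F) (j : ℕ) (hj : j < d₂) (ha : a = 0) (hb : b ∈ cClass F α d₂ j) :
    (hammingNorm (fun t : Fin (n₁ * n₂) =>
        Algebra.trace K F (a * (g₁ : F) ^ (t : ℕ) + b * (g₂ : F) ^ (t : ℕ))) : ℂ)
      = ((Fintype.card K : ℂ) - 1) * (n₁ : ℂ) * (n₂ : ℂ) / (Fintype.card K : ℂ)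
        - ((Fintype.card K : ℂ) - 1) * (d₂ : ℂ) * (n₁ : ℂ)
            / ((Fintype.card K : ℂ) * (N₂ : ℂ)) * gaussPeriod p F α d₂ j := by
  classical
  have hp : p.Prime := Fact.out
  haveI hcharK : CharP K p := by
    obtain ⟨p', hc⟩ := CharP.exists K
    haveI := hc
    have hp' : p'.Prime := CharP.char_is_prime K p'
    obtain ⟨n, hpn, hcard⟩ := FiniteField.card K p'
    have hdvd : p ∣ p' ^ (n : ℕ) := by
      rw [← hcard, hq]
      exact dvd_pow_self p (by omega)
    have hpp' : p = p' := (Nat.prime_dvd_prime_iff_eq hp hp').mp (hp.dvd_of_dvd_pow hdvd)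
    rwa [hpp']
  letI : Algebra (ZMod p) K := ZMod.algebra K p
  haveI : IsScalarTower (ZMod p) K F := IsScalarTower.of_algebraMap_eq' (RingHom.ext_zmod _ _)
  -- basic numerology
  have hq2 : 1 < Fintype.card K := Fintype.one_lt_card
  have hr2 : 1 < Fintype.card F := Fintype.one_lt_card
  set Q := Fintype.card K with hQdef
  set L := Fintype.card F - 1 with hLdef
  have hL0 : 0 < L := by omega
  have horder : orderOf α = L := by
    rw [orderOf_eq_card_of_forall_mem_zpowers hα, Nat.card_eq_fintype_card, Fintype.card_units]
  have hn₂0 : 0 < n₂ := h₂ ▸ orderOf_pos g₂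
  have hn₁0 : 0 < n₁ := h₁ ▸ orderOf_pos g₁
  have hn₂L : n₂ ∣ L := by
    rw [← h₂]
    have horddvd : orderOf g₂ ∣ Fintype.card Fˣ := orderOf_dvd_card
    rwa [Fintype.card_units] at horddvd
  have hN₂n₂ : N₂ * n₂ = L := by rw [hN₂]; exact Nat.div_mul_cancel hn₂L
  have hN₂0 : 0 < N₂ := by
    rcases Nat.eq_zero_or_pos N₂ with h | h
    · rw [h, zero_mul] at hN₂n₂; omega
    · exact h
  have hQ1L : (Q - 1) ∣ L := by
    rw [hLdef, hr]
    have hdd := Nat.sub_dvd_pow_sub_pow Q 1 m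
    simpa using hdd
  have hN₀ex : N₀ * (Q - 1) = L := by rw [hN₀]; exact Nat.div_mul_cancel hQ1L
  have hQ10 : 0 < Q - 1 := by omega
  have hd₂N₀ : d₂ ∣ N₀ := hd₂ ▸ Nat.gcd_dvd_left _ _
  have hd₂N₂ : d₂ ∣ N₂ := hd₂ ▸ Nat.gcd_dvd_right _ _
  have hd₂L : d₂ ∣ L := hd₂N₂.trans ⟨n₂, hN₂n₂.symm⟩
  have hd₂0 : 0 < d₂ := by omega
  set M := L / d₂ with hMdef
  have hMex : d₂ * M = L := Nat.mul_div_cancel' hd₂L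
  have hM0 : 0 < M := by
    rcases Nat.eq_zero_or_pos M with h | h
    · rw [h, mul_zero] at hMex; omega
    · exact h
  set A := N₀ / d₂ with hAdef
  set B := N₂ / d₂ with hBdef
  have hAex : d₂ * A = N₀ := Nat.mul_div_cancel' hd₂N₀
  have hBex : d₂ * B = N₂ := Nat.mul_div_cancel' hd₂N₂
  have hAQ : A * (Q - 1) = M := by
    have h' : d₂ * (A * (Q - 1)) = d₂ * M := by rw [← mul_assoc, hAex, hN₀ex, hMex]
    exact Nat.eq_of_mul_eq_mul_left hd₂0 h'
  have hBn₂ : B * n₂ = M := by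
    have h' : d₂ * (B * n₂) = d₂ * M := by rw [← mul_assoc, hBex, hN₂n₂, hMex]
    exact Nat.eq_of_mul_eq_mul_left hd₂0 h'
  have hABcop : Nat.Coprime A B := by
    rw [hAdef, hBdef, hd₂]
    exact Nat.coprime_div_gcd_div_gcd (by rw [← hd₂]; exact hd₂0)
  haveI : NeZero M := ⟨hM0.ne'⟩
  haveI : NeZero n₂ := ⟨hn₂0.ne'⟩
  haveI : NeZero (Q - 1) := ⟨hQ10.ne'⟩
  -- every unit is a power of α
  have hpow : ∀ x : Fˣ, ∃ k : ℕ, x = α ^ k := by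
    intro x
    obtain ⟨k, hk⟩ := ((isOfFinOrder_of_finite α).mem_powers_iff_mem_zpowers).mpr (hα x)
    exact ⟨k, hk.symm⟩
  -- g₂ = (α ^ N₂) ^ w, with w coprime to n₂
  obtain ⟨k, hk⟩ := hpow g₂
  have hkdvd : L ∣ k * n₂ := by
    rw [← horder, orderOf_dvd_iff_pow_eq_one, pow_mul, ← hk, ← h₂]
    exact pow_orderOf_eq_one g₂
  have hN₂k : N₂ ∣ k := by
    have h' : N₂ * n₂ ∣ k * n₂ := hN₂n₂ ▸ hkdvd
    exact (Nat.mul_dvd_mul_iff_right hn₂0).mp h'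
  obtain ⟨w, hw⟩ := hN₂k
  have hg₂ : g₂ = (α ^ N₂) ^ w := by rw [hk, hw, pow_mul]
  have hLN₂ : L / N₂ = n₂ := by rw [← hN₂n₂, Nat.mul_div_cancel_left _ hN₂0]
  have hordN₂ : orderOf (α ^ N₂) = n₂ := by
    rw [orderOf_pow, horder, Nat.gcd_eq_right ⟨n₂, hN₂n₂.symm⟩, hLN₂]
  have hwn₂ : Nat.Coprime w n₂ := by
    have ho : orderOf ((α ^ N₂) ^ w) = n₂ := by rw [← hg₂, h₂]
    rw [orderOf_pow, hordN₂] at ho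
    have hgd : Nat.gcd n₂ w ∣ n₂ := Nat.gcd_dvd_left _ _
    have h' : n₂ / Nat.gcd n₂ w * Nat.gcd n₂ w = n₂ := Nat.div_mul_cancel hgd
    rw [ho] at h'
    have h'' : n₂ * Nat.gcd n₂ w = n₂ * 1 := by rw [h', mul_one]
    have hone : Nat.gcd n₂ w = 1 := Nat.eq_of_mul_eq_mul_left hn₂0 h''
    exact Nat.coprime_comm.mp hone
  -- b = α ^ (j + d₂ * t₀)
  obtain ⟨t₀, hbb⟩ := hb
  -- the image of Kˣ in F
  have hordN₀ : orderOf (α ^ N₀) = Q - 1 := by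
    have hN₀dvd : N₀ ∣ L := ⟨Q - 1, hN₀ex.symm⟩
    have hN₀0 : 0 < N₀ := by
      rcases Nat.eq_zero_or_pos N₀ with h | h
      · rw [h, zero_mul] at hN₀ex; omega
      · exact h
    rw [orderOf_pow, horder, Nat.gcd_eq_right hN₀dvd, ← hN₀ex,
      Nat.mul_div_cancel_left _ hN₀0]
  have hinjα : Set.InjOn (fun u : ℕ => ((α ^ (N₀ * u) : Fˣ) : F)) (range (Q - 1)) := by
    intro u hu u' hu' huu
    simp only at huu
    have hunit : α ^ (N₀ * u) = α ^ (N₀ * u') := Units.ext huu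
    rw [pow_mul, pow_mul] at hunit
    refine pow_injOn_Iio_orderOf ?_ ?_ hunit
    · rw [Set.mem_Iio, hordN₀]; exact Finset.mem_range.mp (Finset.mem_coe.mp hu)
    · rw [Set.mem_Iio, hordN₀]; exact Finset.mem_range.mp (Finset.mem_coe.mp hu')
  have himage : Finset.image (algebraMap K F) (Finset.univ \ {0})
      = Finset.image (fun u : ℕ => ((α ^ (N₀ * u) : Fˣ) : F)) (range (Q - 1)) := by
    apply Finset.eq_of_subset_of_card_le
    · -- RHS of eq (image of ιK) ⊆ powers of α^{N₀}
      intro z hz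
      obtain ⟨y, hy, hyz⟩ := Finset.mem_image.mp hz
      have hy0 : y ≠ 0 := by
        simp only [Finset.mem_sdiff, Finset.mem_singleton] at hy
        exact hy.2
      have hz0 : z ≠ 0 := by
        rw [← hyz]
        exact fun h => hy0 ((algebraMap K F).injective (by rw [h, map_zero]))
      obtain ⟨U, hU⟩ : ∃ U : Fˣ, (U : F) = z := ⟨(Ne.isUnit hz0).unit, rfl⟩
      obtain ⟨k', hk'⟩ := hpow U
      have hUQ : U ^ (Q - 1) = 1 := by
        apply Units.ext
        rw [Units.val_pow_eq_pow_val, hU, Units.val_one, ← hyz, ← map_pow,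
          FiniteField.pow_card_sub_one_eq_one y hy0, map_one]
      rw [hk', ← pow_mul] at hUQ
      have hLdvd : L ∣ k' * (Q - 1) := by
        rw [← horder]
        exact orderOf_dvd_iff_pow_eq_one.mpr hUQ
      have hN₀k' : N₀ ∣ k' := by
        have h' : N₀ * (Q - 1) ∣ k' * (Q - 1) := hN₀ex ▸ hLdvd
        exact (Nat.mul_dvd_mul_iff_right hQ10).mp h'
      obtain ⟨w', hw'⟩ := hN₀k'
      refine Finset.mem_image.mpr ⟨w' % (Q - 1), Finset.mem_range.mpr (Nat.mod_lt _ hQ10), ?_⟩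
      have : (α ^ N₀) ^ (w' % (Q - 1)) = U := by
        rw [← hordN₀, pow_mod_orderOf, ← pow_mul, ← hw', ← hk']
      show ((α ^ (N₀ * (w' % (Q - 1))) : Fˣ) : F) = z
      rw [pow_mul, this, hU]
    · -- card
      have hcard1 : (Finset.image (fun u : ℕ => ((α ^ (N₀ * u) : Fˣ) : F)) (range (Q - 1))).card
          = Q - 1 := by
        rw [Finset.card_image_of_injOn hinjα, Finset.card_range]
      have hcard2 : (Finset.image (algebraMap K F) (Finset.univ \ {0})).card = Q - 1 := by
        rw [Finset.card_image_of_injective _ (algebraMap K F).injective,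
          Finset.card_sdiff_of_subset (by simp), Finset.card_univ, Finset.card_singleton]
      rw [hcard1, hcard2]
  -- the product as a power of α
  have hψprod : ∀ t u : ℕ, ((α ^ (N₀ * u) : Fˣ) : F) * (b * ((g₂ : Fˣ) : F) ^ t)
      = ((α ^ (j + d₂ * (t₀ + A * u + (B * w) * t)) : Fˣ) : F) := by
    intro t u
    have hunit : (α ^ (N₀ * u)) * (α ^ (j + d₂ * t₀) * ((α ^ N₂) ^ w) ^ t)
        = α ^ (j + d₂ * (t₀ + A * u + (B * w) * t)) := by
      rw [← pow_mul, ← pow_mul, ← pow_add, ← pow_add]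
      congr 1
      rw [← hAex, ← hBex]
      ring
    rw [hbb, hg₂]
    calc ((α ^ (N₀ * u) : Fˣ) : F)
          * (((α ^ (j + d₂ * t₀) : Fˣ) : F) * (((((α ^ N₂) ^ w : Fˣ)) : F)) ^ t)
        = (((α ^ (N₀ * u)) * (α ^ (j + d₂ * t₀) * ((α ^ N₂) ^ w) ^ t) : Fˣ) : F) := by
          push_cast
          ring
      _ = ((α ^ (j + d₂ * (t₀ + A * u + (B * w) * t)) : Fˣ) : F) := by rw [hunit]
  -- the function G on ZMod M
  set G : ZMod M → ℂ := fun v => psi p F ((α ^ (j + d₂ * v.val) : Fˣ) : F) with hGdef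
  have hordd₂ : orderOf (α ^ d₂) = M := by
    rw [orderOf_pow, horder, Nat.gcd_eq_right hd₂L, ← hMex, Nat.mul_div_cancel_left _ hd₂0]
  have hGnat : ∀ k : ℕ, psi p F ((α ^ (j + d₂ * k) : Fˣ) : F) = G ((k : ℕ) : ZMod M) := by
    intro k
    simp only [hGdef]
    have hval : (((k : ℕ) : ZMod M)).val = k % M := ZMod.val_natCast M k
    rw [hval]
    have hunit : α ^ (j + d₂ * (k % M)) = α ^ (j + d₂ * k) := by
      rw [pow_add, pow_add, pow_mul, pow_mul]
      congr 1
      rw [← hordd₂]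
      exact pow_mod_orderOf _ _
    rw [hunit]
  -- apply the double sum
  obtain ⟨k₀, hk₀M, hsumeq⟩ := double_sum_eq (Q - 1) n₂ M A (B * w) t₀
    (hAQ ▸ dvd_refl M) (⟨w, by rw [← hBn₂]; ring⟩)
    (by
      set g := Nat.gcd A (Nat.gcd (B * w) M) with hg
      have hgA : g ∣ A := Nat.gcd_dvd_left _ _
      have hgBw : g ∣ B * w := (Nat.gcd_dvd_right _ _).trans (Nat.gcd_dvd_left _ _)
      have hgM : g ∣ M := (Nat.gcd_dvd_right _ _).trans (Nat.gcd_dvd_right _ _)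
      have hgB : Nat.Coprime g B := Nat.Coprime.coprime_dvd_left hgA hABcop
      have hgw : g ∣ w := (Nat.Coprime.dvd_of_dvd_mul_left hgB) hgBw
      have hgn₂ : g ∣ n₂ := by
        have hgm' : g ∣ B * n₂ := hBn₂.symm ▸ hgM
        exact (Nat.Coprime.dvd_of_dvd_mul_left hgB) hgm'
      have hgd : g ∣ Nat.gcd w n₂ := Nat.dvd_gcd hgw hgn₂
      rwa [hwn₂, Nat.dvd_one] at hgd) G
  -- Gauss period
  have hη : ∑ v : ZMod M, G v = gaussPeriod p F α d₂ j := by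
    rw [gaussPeriod]
    have hM' : (Fintype.card F - 1) / d₂ = M := by rw [hMdef, hLdef]
    rw [hM']
    exact sum_range_zmod M (fun k => psi p F ((α ^ (j + d₂ * k) : Fˣ) : F))
  -- the zero-count
  set Z := #{t ∈ range n₂ | Algebra.trace K F (b * ((g₂ : Fˣ) : F) ^ t) = 0} with hZdef
  have hqZ : (Q : ℂ) * Z = n₂ + k₀ * gaussPeriod p F α d₂ j := by
    have lhs_eq : ∑ t ∈ range n₂, ∑ y : K,
          psi p F (algebraMap K F y * (b * ((g₂ : Fˣ) : F) ^ t)) = (Q : ℂ) * Z := by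
      have h1 : ∀ t ∈ range n₂, ∑ y : K,
            psi p F (algebraMap K F y * (b * ((g₂ : Fˣ) : F) ^ t))
          = if Algebra.trace K F (b * ((g₂ : Fˣ) : F) ^ t) = 0 then (Q : ℂ) else 0 :=
        fun t _ => sum_K p K F _
      rw [Finset.sum_congr rfl h1]
      rw [hZdef]
      rw [Finset.sum_ite, Finset.sum_const, Finset.sum_const]
      simp [mul_comm]
    have rhs_eq : ∑ t ∈ range n₂, ∑ y : K,
          psi p F (algebraMap K F y * (b * ((g₂ : Fˣ) : F) ^ t))
        = (n₂ : ℂ) + (k₀ : ℂ) * gaussPeriod p F α d₂ j := by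
      have hsplit : ∀ t ∈ range n₂, ∑ y : K,
            psi p F (algebraMap K F y * (b * ((g₂ : Fˣ) : F) ^ t))
          = (∑ u ∈ range (Q - 1),
              G ((t₀ + A * u + (B * w) * t : ℕ) : ZMod M)) + 1 := by
        intro t _
        rw [Finset.sum_eq_sum_sdiff_singleton_add (Finset.mem_univ (0 : K))]
        congr 1
        · have e1 : ∑ z ∈ (Finset.univ \ {0} : Finset K).image (algebraMap K F),
                psi p F (z * (b * ((g₂ : Fˣ) : F) ^ t))
              = ∑ y ∈ (Finset.univ \ {0} : Finset K),
                psi p F (algebraMap K F y * (b * ((g₂ : Fˣ) : F) ^ t)) :=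
            Finset.sum_image (fun y _ y' _ h => (algebraMap K F).injective h)
          have e2 : ∑ z ∈ (range (Q - 1)).image (fun u : ℕ => ((α ^ (N₀ * u) : Fˣ) : F)),
                psi p F (z * (b * ((g₂ : Fˣ) : F) ^ t))
              = ∑ u ∈ range (Q - 1),
                psi p F (((α ^ (N₀ * u) : Fˣ) : F) * (b * ((g₂ : Fˣ) : F) ^ t)) :=
            Finset.sum_image (fun u hu u' hu' h => hinjα (Finset.mem_coe.mpr hu)
              (Finset.mem_coe.mpr hu') h)
          rw [← e1, himage, e2]
          refine Finset.sum_congr rfl fun u _ => ?_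
          rw [hψprod t u, hGnat]
        · rw [map_zero, zero_mul, psi_zero p F]
      rw [Finset.sum_congr rfl hsplit, Finset.sum_add_distrib, Finset.sum_const,
        Finset.card_range, nsmul_eq_mul, mul_one, hsumeq, hη, add_comm]
    rw [← lhs_eq, rhs_eq]
  -- the weight
  have hZle : Z ≤ n₂ := by
    rw [hZdef]
    calc #{t ∈ range n₂ | Algebra.trace K F (b * ((g₂ : Fˣ) : F) ^ t) = 0}
        ≤ (range n₂).card := Finset.card_filter_le _ _
      _ = n₂ := Finset.card_range n₂
  have hWnat : hammingNorm (fun t : Fin (n₁ * n₂) =>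
        Algebra.trace K F (a * ((g₁ : Fˣ) : F) ^ (t : ℕ) + b * ((g₂ : Fˣ) : F) ^ (t : ℕ)))
      = n₁ * (n₂ - Z) := by
    have hfn : ∀ t : Fin (n₁ * n₂),
        Algebra.trace K F (a * ((g₁ : Fˣ) : F) ^ (t : ℕ) + b * ((g₂ : Fˣ) : F) ^ (t : ℕ))
        = Algebra.trace K F (b * ((g₂ : Fˣ) : F) ^ (t : ℕ)) := by
      intro t
      rw [ha, zero_mul, zero_add]
    set FN : ℕ → ℕ := fun t =>
      if Algebra.trace K F (b * ((g₂ : Fˣ) : F) ^ t) = 0 then 0 else 1 with hFN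
    have h1 : hammingNorm (fun t : Fin (n₁ * n₂) =>
        Algebra.trace K F (a * ((g₁ : Fˣ) : F) ^ (t : ℕ) + b * ((g₂ : Fˣ) : F) ^ (t : ℕ)))
        = ∑ i : Fin (n₁ * n₂), FN (i : ℕ) := by
      rw [hammingNorm, Finset.card_filter]
      refine Finset.sum_congr rfl fun i _ => ?_
      rw [hfn i, hFN]
      by_cases h : Algebra.trace K F (b * ((g₂ : Fˣ) : F) ^ (i : ℕ)) = 0 <;> simp [h]
    rw [h1, Fin.sum_univ_eq_sum_range (fun i => FN i) (n₁ * n₂)]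
    have h2 : ∀ t, FN t = FN (t % n₂) := by
      intro t
      have hcoe : ((g₂ : Fˣ) : F) ^ t = ((g₂ : Fˣ) : F) ^ (t % n₂) := by
        conv_lhs => rw [← pow_mod_orderOf]
        rw [orderOf_units, h₂]
      rw [hFN]
      simp only [hcoe]
    have h3 : ∑ t ∈ range (n₁ * n₂), FN t = ∑ t ∈ range (n₁ * n₂), FN (t % n₂) :=
      Finset.sum_congr rfl fun t _ => h2 t
    rw [h3, periodic_sum n₂ n₁ FN]
    congr 1
    have h4 : ∑ t ∈ range n₂, FN t
        = #{t ∈ range n₂ | ¬ Algebra.trace K F (b * ((g₂ : Fˣ) : F) ^ t) = 0} := by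
      rw [Finset.card_filter]
      refine Finset.sum_congr rfl fun t _ => ?_
      rw [hFN]
      by_cases h : Algebra.trace K F (b * ((g₂ : Fˣ) : F) ^ t) = 0 <;> simp [h]
    have h5 := Finset.card_filter_add_card_filter_not
      (s := range n₂) (p := fun t => Algebra.trace K F (b * ((g₂ : Fˣ) : F) ^ t) = 0)
    rw [Finset.card_range] at h5
    rw [h4]
    omega
  -- final algebra
  have hk₀N₂ : k₀ * N₂ = (Q - 1) * d₂ := by
    have e1 : k₀ * N₂ * n₂ = (Q - 1) * d₂ * n₂ := by
      have e2 : k₀ * (d₂ * M) = (Q - 1) * n₂ * d₂ := by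
        rw [mul_comm d₂ M, ← mul_assoc, hk₀M]
      calc k₀ * N₂ * n₂ = k₀ * (N₂ * n₂) := by ring
        _ = k₀ * L := by rw [hN₂n₂]
        _ = k₀ * (d₂ * M) := by rw [hMex]
        _ = (Q - 1) * n₂ * d₂ := e2
        _ = (Q - 1) * d₂ * n₂ := by ring
    exact Nat.eq_of_mul_eq_mul_right hn₂0 e1
  have hQC : (Q : ℂ) ≠ 0 := by
    exact_mod_cast (by omega : Q ≠ 0)
  have hN₂C : (N₂ : ℂ) ≠ 0 := by
    exact_mod_cast hN₂0.ne'
  have hk₀C : (k₀ : ℂ) * (N₂ : ℂ) = ((Q : ℂ) - 1) * (d₂ : ℂ) := by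
    have hcc := congrArg (fun n : ℕ => (n : ℂ)) hk₀N₂
    push_cast [Nat.cast_sub (by omega : 1 ≤ Q)] at hcc
    exact hcc
  rw [hWnat]
  push_cast [Nat.cast_sub hZle]
  have hZC : (Z : ℂ) = ((n₂ : ℂ) + (k₀ : ℂ) * gaussPeriod p F α d₂ j) / (Q : ℂ) := by
    rw [← hqZ]
    field_simp
  rw [hZC]
  field_simp
  linear_combination (-(n₁:ℂ) * gaussPeriod p F α d₂ j) * hk₀C
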